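/- arXiv:1907.07372 — 3 statements merged into one kernel-verified Lean document; each statement's English description precedes it below -/
import Mathlib

section
/- Let A be a commutative ring, M a finitely generated A-module, B a commutative finite A-algebra acting on M, and ι : Z → B a monoid homomorphism from a commutative monoid Z into (B, ·). Call a maximal ideal n of B ordinary if n ∩ ι(Z) = ∅. Suppose B is a finite algebra over a complete local Noetherian ring (so B is semi-local and M decomposes as the product of its localizations at maximal ideals of B). Then M_ord := ∏_{n ordinary} M_n is a direct summand of M on which every element ι(z), z ∈ Z, acts invertibly; consequently the Z-action on M_ord extends uniquely to an action of the group completion of Z. -/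
/-- In an Artinian commutative ring, for every element `b` there is an idempotent `e`
such that `b` is invertible on `eB` and some power of `b` is killed by `1 - e`. -/
private lemma exists_fitting_idem {B : Type*} [CommRing B] [IsArtinianRing B] (b : B) :
    ∃ e u : B, e * e = e ∧ u * b = e ∧ (∀ k : ℕ, ∃ d, e = d * b ^ k) ∧
      (∃ m : ℕ, (1 - e) * b ^ m = 0) := by
  -- the chain of ideals (b^k) stabilizes
  obtain ⟨n, hn⟩ := IsArtinian.monotone_stabilizes (R := B) (M := B)
    ⟨fun k => Ideal.span {b ^ k}, by
      intro i j hij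
      change Ideal.span {b ^ j} ≤ Ideal.span {b ^ i}
      rw [Ideal.span_singleton_le_iff_mem, Ideal.mem_span_singleton']
      exact ⟨b ^ (j - i), by rw [← pow_add, Nat.sub_add_cancel hij]⟩⟩
  set m := n + 1 with hm
  have hmem : b ^ m ∈ Ideal.span {b ^ (m + m)} := by
    have h1 := hn m (by omega)
    have h2 := hn (m + m) (by omega)
    have h3 : Ideal.span {b ^ m} = Ideal.span {b ^ (m + m)} := by
      have h := h1.symm.trans h2
      exact h
    rw [← h3]
    exact Ideal.mem_span_singleton'.mpr ⟨1, one_mul _⟩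
  obtain ⟨c, hc⟩ := Ideal.mem_span_singleton'.mp hmem
  rw [pow_add] at hc
  have hidem : (c * b ^ m) * (c * b ^ m) = c * b ^ m := by
    calc (c * b ^ m) * (c * b ^ m) = c * (c * (b ^ m * b ^ m)) := by ring
    _ = c * b ^ m := by rw [hc]
  refine ⟨c * b ^ m, c * b ^ n, hidem, ?_, ?_, ⟨m, ?_⟩⟩
  · rw [mul_assoc, ← pow_succ]
  · intro k
    induction k with
    | zero => exact ⟨c * b ^ m, by rw [pow_zero, mul_one]⟩
    | succ k ih =>
      obtain ⟨d, hd⟩ := ih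
      refine ⟨c * b ^ n * d, ?_⟩
      calc c * b ^ m = (c * b ^ m) * (c * b ^ m) := hidem.symm
      _ = (c * b ^ m) * (d * b ^ k) := by rw [← hd]
      _ = c * b ^ n * d * b ^ (k + 1) := by rw [hm]; ring
  · calc (1 - c * b ^ m) * b ^ m = b ^ m - c * (b ^ m * b ^ m) := by ring
    _ = 0 := by rw [hc, sub_self]

/-- Let `B` be a commutative ring which is finite over a complete local
Noetherian ring (modelled here by `B` Artinian, as in the paper's setting where `B` is a
finite algebra over `O_E/ϖ^s` or a semilocal complete ring), `M` a finitely generated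
`B`-module, and `ι : Z → B` a monoid homomorphism from a commutative monoid `Z` into
`(B, ·)`.  Then the ordinary part `M_ord = ∏_{n ordinary} M_n` exists as a direct
summand `N` of `M`: every `ι z` acts bijectively (hence invertibly) on `N`, and `N` is
the largest submodule on which all `ι z` act invertibly (so that the `Z`-action on `N`
extends uniquely to an action of the group completion of `Z`). -/
theorem statement_4 {B : Type*} [CommRing B] [IsArtinianRing B]
    {M : Type*} [AddCommGroup M] [Module B M] [Module.Finite B M]
    {Z : Type*} [CommMonoid Z] (ι : Z →* B) :
    ∃ N : Submodule B M,
      (∃ N' : Submodule B M, IsCompl N N') ∧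
      (∀ z : Z, Set.BijOn (fun x => ι z • x) (N : Set M) (N : Set M)) ∧
      (∀ N'' : Submodule B M,
        (∀ z : Z, Set.BijOn (fun x => ι z • x) (N'' : Set M) (N'' : Set M)) → N'' ≤ N) := by
  classical
  choose E U hEE hUE hdvd hkill using (exists_fitting_idem (B := B))
  set I : B → Submodule B M := fun b => LinearMap.range (LinearMap.lsmul B M (E b)) with hIdef
  have hmemI : ∀ (b : B) (x : M), x ∈ I b ↔ E b • x = x := by
    intro b x
    constructor
    · rintro ⟨y, rfl⟩
      show E b • (E b • y) = E b • y
      rw [← mul_smul, hEE]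
    · intro h
      exact ⟨x, h⟩
  -- I (a * b) ≤ I a
  have hmul : ∀ a b : B, I (a * b) ≤ I a := by
    intro a b x hx
    rw [hmemI] at hx ⊢
    obtain ⟨m, hma⟩ := hkill a
    obtain ⟨d, hd⟩ := hdvd (a * b) m
    have h2 : (1 - E a) * E (a * b) = 0 := by
      rw [hd, mul_pow]
      calc (1 - E a) * (d * (a ^ m * b ^ m)) = d * b ^ m * ((1 - E a) * a ^ m) := by ring
      _ = 0 := by rw [hma, mul_zero]
    have key : E a * E (a * b) = E (a * b) := by linear_combination -h2
    calc E a • x = E a • (E (a * b) • x) := by rw [hx]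
    _ = (E a * E (a * b)) • x := (mul_smul _ _ _).symm
    _ = E (a * b) • x := by rw [key]
    _ = x := hx
  -- choose a minimal element among the I (ι z)
  obtain ⟨P, ⟨z₀, hz₀⟩, hmin⟩ := IsArtinian.set_has_minimal (R := B) (M := M)
    (Set.range fun z : Z => I (ι z)) ⟨I (ι 1), 1, rfl⟩
  -- N := I (ι z₀)
  refine ⟨I (ι z₀), ⟨LinearMap.range (LinearMap.lsmul B M (1 - E (ι z₀))), ?_⟩, ?_, ?_⟩
  · -- complement via the idempotent
    constructor
    · rintro Q hQ1 hQ2 x hx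
      have h1 := hQ1 hx
      have h2 := hQ2 hx
      rw [hmemI] at h1
      obtain ⟨y, hy⟩ := h2
      have hy' : (1 - E (ι z₀)) • y = x := hy
      have : E (ι z₀) • x = 0 := by
        rw [← hy', ← mul_smul]
        have : E (ι z₀) * (1 - E (ι z₀)) = 0 := by linear_combination -hEE (ι z₀)
        rw [this, zero_smul]
      simp only [Submodule.mem_bot]
      rw [← h1, this]
    · rw [codisjoint_iff, eq_top_iff]
      intro x _
      rw [Submodule.mem_sup]
      refine ⟨E (ι z₀) • x, ⟨x, rfl⟩, (1 - E (ι z₀)) • x, ⟨x, rfl⟩, ?_⟩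
      rw [← add_smul]
      simp
  · -- every ι z acts bijectively on N
    intro z
    -- N = I (ι (z₀ * z)), by minimality
    have hle : I (ι (z₀ * z)) ≤ I (ι z₀) := by
      rw [map_mul]; exact hmul _ _
    have heq : I (ι (z₀ * z)) = I (ι z₀) := by
      rcases eq_or_lt_of_le hle with h | h
      · exact h
      · have hz₀' : I (ι z₀) = P := hz₀
        rw [hz₀'] at h
        exact absurd h (hmin _ ⟨z₀ * z, rfl⟩)
    have hfix : ∀ x ∈ I (ι z₀), U (ι (z₀ * z)) • (ι z • (ι z₀ • x)) = x := by
      intro x hx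
      rw [← heq, hmemI] at hx
      calc U (ι (z₀ * z)) • (ι z • (ι z₀ • x))
          = (U (ι (z₀ * z)) * ι (z₀ * z)) • x := by
            simp only [← mul_smul]
            congr 1
            rw [map_mul]
            ring
      _ = E (ι (z₀ * z)) • x := by rw [hUE]
      _ = x := hx
    have hmapsto : ∀ w : Z, ∀ x ∈ I (ι z₀), ι w • x ∈ I (ι z₀) := by
      intro w x hx
      exact Submodule.smul_mem _ _ hx
    refine ⟨fun x hx => hmapsto z x hx, ?_, ?_⟩
    · -- injective on N
      intro x hx y hy hxy
      simp only at hxy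
      have h1 := hfix x hx
      have h2 := hfix y hy
      rw [← h1, ← h2]
      rw [smul_comm (ι z) (ι z₀) x, smul_comm (ι z) (ι z₀) y] at *
      rw [hxy]
    · -- surjective onto N
      intro x hx
      refine ⟨ι z₀ • (U (ι (z₀ * z)) • x), ?_, ?_⟩
      · exact Submodule.smul_mem _ _ (Submodule.smul_mem _ _ hx)
      · show ι z • (ι z₀ • (U (ι (z₀ * z)) • x)) = x
        have := hfix x hx
        calc ι z • (ι z₀ • (U (ι (z₀ * z)) • x))
            = U (ι (z₀ * z)) • (ι z • (ι z₀ • x)) := by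
              simp only [← mul_smul]
              congr 1
              ring
        _ = x := hfix x hx
  · -- maximality
    intro N'' hbij
    intro x hx
    obtain ⟨m, hm⟩ := hkill (ι z₀)
    -- iterate surjectivity of ι z₀ on N''
    have hiter : ∀ k : ℕ, ∀ x ∈ N'', ∃ y ∈ N'', (ι z₀) ^ k • y = x := by
      intro k
      induction k with
      | zero => intro x hx; exact ⟨x, hx, by rw [pow_zero, one_smul]⟩
      | succ k ih =>
        intro x hx
        obtain ⟨w, hw, hwx⟩ := (hbij z₀).surjOn hx
        obtain ⟨y, hy, hyw⟩ := ih w hw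
        refine ⟨y, hy, ?_⟩
        rw [pow_succ', mul_smul, hyw]
        exact hwx
    obtain ⟨y, _, hyx⟩ := hiter m x hx
    rw [hmemI]
    have : (1 - E (ι z₀)) • x = 0 := by
      rw [← hyx, ← mul_smul, hm, zero_smul]
    have h := sub_smul (1 : B) (E (ι z₀)) x
    rw [this, one_smul] at h
    exact (sub_eq_zero.mp h.symm).symm
end

section
/- Let Γ be a profinite group, k a finite field, and ρ̄ : Γ → P(k) a continuous representation landing in a parabolic subgroup P ⊆ GL_n with Levi decomposition into blocks ρ̄_1, ..., ρ̄_k (the graded pieces of the associated filtration F on V = k^n). Assume Hom_Γ(ρ̄_i, ρ̄_j) = 0 for all i ≠ j. If A is a local Artinian ring with residue field k and M_1, M_2 ∈ GL_n(A) are such that M_i ρ_A M_i^{-1} has image in P(A) and reduces to ρ̄ modulo the maximal ideal (for a fixed lift ρ_A : Γ → GL_n(A) of ρ̄), then M_1 M_2^{-1} ∈ P(A). -/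
/-- The index of the diagonal block (among blocks of sizes `nn 0, …, nn (K-1)`)
containing the row/column index `a`. -/
def blockIdx (K : ℕ) (nn : ℕ → ℕ) (a : ℕ) : ℕ :=
  ((Finset.range K).filter fun i => ∑ j ∈ Finset.range (i + 1), nn j ≤ a).card

/-- A matrix lies in the standard block-upper-triangular parabolic `P` iff all entries
strictly below the diagonal blocks vanish. -/
def IsBlockUpper {R : Type*} [Semiring R] (n K : ℕ) (nn : ℕ → ℕ)
    (M : Matrix (Fin n) (Fin n) R) : Prop :=
  ∀ a b : Fin n, blockIdx K nn (b : ℕ) < blockIdx K nn (a : ℕ) → M a b = 0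

/-- The `i`-th diagonal block of a matrix, viewed as a full-size matrix (the graded
piece of the associated filtered representation). -/
def diagBlock {R : Type*} [Semiring R] (n K : ℕ) (nn : ℕ → ℕ) (i : ℕ)
    (M : Matrix (Fin n) (Fin n) R) : Matrix (Fin n) (Fin n) R :=
  fun a b => if blockIdx K nn (a : ℕ) = i ∧ blockIdx K nn (b : ℕ) = i then M a b else 0

/-- A matrix supported on the `(i,j)` block (a linear map from the `j`-th graded piece
to the `i`-th one). -/
def IsBlockSupported {R : Type*} [Semiring R] (n K : ℕ) (nn : ℕ → ℕ) (i j : ℕ)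
    (C : Matrix (Fin n) (Fin n) R) : Prop :=
  ∀ a b : Fin n, ¬(blockIdx K nn (a : ℕ) = i ∧ blockIdx K nn (b : ℕ) = j) → C a b = 0


lemma sep {A : Type*} [CommRing A] {k : Type*} [Field k]
    (φ : A →+* k) (hφ : Function.Surjective φ) (t : ℕ) (x : A)
    (hx : x ∈ (RingHom.ker φ) ^ t) (hnx : x ∉ (RingHom.ker φ) ^ (t + 1)) :
    ∃ μ : A → k,
      (∀ y z : A, y ∈ (RingHom.ker φ) ^ t → z ∈ (RingHom.ker φ) ^ t →
        μ (y + z) = μ y + μ z) ∧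
      (∀ (a y : A), y ∈ (RingHom.ker φ) ^ t → μ (a * y) = φ a * μ y) ∧
      (∀ y ∈ (RingHom.ker φ) ^ (t + 1), μ y = 0) ∧
      μ x ≠ 0 := by
  classical
  set I : Ideal A := RingHom.ker φ with hI
  haveI hmax : I.IsMaximal := RingHom.ker_isMaximal_of_surjective φ hφ
  let S : Submodule A A := I ^ t
  let N : Submodule A ↥S := Submodule.comap S.subtype (I ^ (t + 1) : Ideal A)
  let V : Type _ := ↥S ⧸ N
  have memN : ∀ (y : ↥S), y ∈ N ↔ (y : A) ∈ I ^ (t + 1) := by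
    intro y; simp [N, Submodule.mem_comap]
  have tor : Module.IsTorsionBySet A V (I : Set A) := by
    intro v c
    obtain ⟨y, rfl⟩ := Submodule.Quotient.mk_surjective N v
    rw [← Submodule.Quotient.mk_smul, Submodule.Quotient.mk_eq_zero, memN]
    show ((c : A) • (y : A)) ∈ I ^ (t + 1)
    have hcy : (c : A) • (y : A) = (y : A) * (c : A) := by rw [smul_eq_mul, mul_comm]
    rw [hcy, pow_succ]
    exact Ideal.mul_mem_mul y.2 c.2
  letI : Module (A ⧸ I) V := tor.module
  letI : Field (A ⧸ I) := Ideal.Quotient.field I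
  set v₀ : V := Submodule.Quotient.mk ⟨x, hx⟩ with hv₀
  have hv₀ne : v₀ ≠ 0 := by
    rw [hv₀, Ne, Submodule.Quotient.mk_eq_zero, memN]
    exact hnx
  have : ¬ (∀ f : Module.Dual (A ⧸ I) V, f v₀ = 0) := by
    rw [Module.forall_dual_apply_eq_zero_iff]
    exact hv₀ne
  push_neg at this
  obtain ⟨f, hf⟩ := this
  -- the ring equivalence A ⧸ I ≃+* k
  let e : (A ⧸ I) ≃+* k := RingHom.quotientKerEquivOfSurjective hφ
  have he : ∀ a : A, e (Ideal.Quotient.mk I a) = φ a := fun a => rfl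
  refine ⟨fun y => if h : y ∈ I ^ t then e (f (Submodule.Quotient.mk ⟨y, h⟩)) else 0,
    ?_, ?_, ?_, ?_⟩
  · intro y z hy hz
    dsimp only
    rw [dif_pos hy, dif_pos hz, dif_pos (Submodule.add_mem _ hy hz)]
    have h1 : (⟨y + z, Submodule.add_mem _ hy hz⟩ : ↥S) = ⟨y, hy⟩ + ⟨z, hz⟩ := rfl
    rw [h1, Submodule.Quotient.mk_add, map_add, map_add]
  · intro a y hy
    have hay : a * y ∈ I ^ t := Ideal.mul_mem_left _ _ hy
    dsimp only
    rw [dif_pos hy, dif_pos hay]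
    have h1 : (⟨a * y, hay⟩ : ↥S) = a • ⟨y, hy⟩ := by ext; simp
    rw [h1, Submodule.Quotient.mk_smul]
    have h2 : (a • Submodule.Quotient.mk (p := N) ⟨y, hy⟩ : V)
        = (Ideal.Quotient.mk I a) • Submodule.Quotient.mk (p := N) ⟨y, hy⟩ :=
      (tor.mk_smul a _).symm
    rw [h2, map_smul, smul_eq_mul, map_mul, he]
  · intro y hy
    have hy' : y ∈ I ^ t := Ideal.pow_le_pow_right (Nat.le_succ t) hy
    dsimp only
    rw [dif_pos hy']
    have : Submodule.Quotient.mk (p := N) ⟨y, hy'⟩ = 0 := by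
      rw [Submodule.Quotient.mk_eq_zero, memN]; exact hy
    rw [this, map_zero, map_zero]
  · dsimp only
    rw [dif_pos hx]
    intro h
    exact hf (e.injective (by rw [map_zero]; exact h))

lemma blockIdx_lt {n K : ℕ} {nn : ℕ → ℕ} (hsum : ∑ i ∈ Finset.range K, nn i = n)
    (a : Fin n) : blockIdx K nn (a : ℕ) < K := by
  have hK : 0 < K := by
    rcases Nat.eq_zero_or_pos K with h | h
    · subst h; simp at hsum; exact absurd a.2 (by omega)
    · exact h
  have hmem : K - 1 ∉ (Finset.range K).filter
      (fun i => ∑ j ∈ Finset.range (i + 1), nn j ≤ (a : ℕ)) := by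
    intro h
    rw [Finset.mem_filter] at h
    have := h.2
    rw [Nat.sub_add_cancel hK, hsum] at this
    exact absurd a.2 (by omega)
  have hss : (Finset.range K).filter
      (fun i => ∑ j ∈ Finset.range (i + 1), nn j ≤ (a : ℕ)) ⊂ Finset.range K :=
    (Finset.ssubset_iff_of_subset (Finset.filter_subset _ _)).2
      ⟨K - 1, Finset.mem_range.2 (by omega), hmem⟩
  have := Finset.card_lt_card hss
  rwa [Finset.card_range] at this


lemma key {Γ : Type*} [Group Γ] {k : Type*} [Field k]
    (n K : ℕ) (nn : ℕ → ℕ)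
    (hsum : ∑ i ∈ Finset.range K, nn i = n)
    (ρbar : Γ →* GL (Fin n) k)
    (hom0 : ∀ i j : ℕ, i < K → j < K → i ≠ j → ∀ C : Matrix (Fin n) (Fin n) k,
      IsBlockSupported n K nn i j C →
      (∀ g, diagBlock n K nn i ((ρbar g).val) * C = C * diagBlock n K nn j ((ρbar g).val)) →
      C = 0)
    {A : Type*} [CommRing A] [IsArtinianRing A] [IsLocalRing A]
    (φ : A →+* k) (hφ : Function.Surjective φ) (hker : ∀ a : A, φ a = 0 ↔ ¬IsUnit a)
    (ρA : Γ →* GL (Fin n) A)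
    (M₁ M₂ : GL (Fin n) A)
    (h1 : ∀ g, IsBlockUpper n K nn ((M₁ * ρA g * M₁⁻¹).val))
    (h1r : ∀ g, ((M₁ * ρA g * M₁⁻¹).val).map φ = (ρbar g).val)
    (h2 : ∀ g, IsBlockUpper n K nn ((M₂ * ρA g * M₂⁻¹).val))
    (h2r : ∀ g, ((M₂ * ρA g * M₂⁻¹).val).map φ = (ρbar g).val) :
    IsBlockUpper n K nn ((M₁ * M₂⁻¹).val) := by
  classical
  have rel : ∀ g, (M₁ * M₂⁻¹).val * (M₂ * ρA g * M₂⁻¹).val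
      = (M₁ * ρA g * M₁⁻¹).val * (M₁ * M₂⁻¹).val := by
    intro g
    have h : (M₁ * M₂⁻¹) * (M₂ * ρA g * M₂⁻¹) = (M₁ * ρA g * M₁⁻¹) * (M₁ * M₂⁻¹) := by
      group
    have := congrArg Units.val h
    simpa only [Units.val_mul] using this
  set I : Ideal A := RingHom.ker φ with hIdef
  have hIeq : I = IsLocalRing.maximalIdeal A := by
    ext a
    rw [hIdef, RingHom.mem_ker, hker, IsLocalRing.mem_maximalIdeal, mem_nonunits_iff]
  obtain ⟨Nn, hNn⟩ : IsNilpotent I := by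
    rw [hIeq, ← IsLocalRing.jacobson_eq_maximalIdeal (⊥ : Ideal A) bot_ne_top]
    exact IsArtinianRing.isNilpotent_jacobson_bot
  set Mv : Matrix (Fin n) (Fin n) A := (M₁ * M₂⁻¹).val with hMv
  have main : ∀ t : ℕ, ∀ a b : Fin n, blockIdx K nn (b : ℕ) < blockIdx K nn (a : ℕ) →
      Mv a b ∈ I ^ t := by
    intro t
    induction t with
    | zero => intro a b _; simp [Ideal.one_eq_top]
    | succ t ih =>
      have aux : ∀ m : ℕ, ∀ a b : Fin n, blockIdx K nn (b : ℕ) < blockIdx K nn (a : ℕ) →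
          K - (blockIdx K nn (a : ℕ) - blockIdx K nn (b : ℕ)) ≤ m → Mv a b ∈ I ^ (t + 1) := by
        intro m
        induction m with
        | zero =>
          intro a b hab h0
          exact absurd h0 (by have := blockIdx_lt hsum a; omega)
        | succ m ihm =>
          intro a b hab hm
          set i : ℕ := blockIdx K nn (a : ℕ) with hi
          set j : ℕ := blockIdx K nn (b : ℕ) with hj
          have hiK : i < K := blockIdx_lt hsum a
          have hjK : j < K := by omega
          by_contra hnx
          obtain ⟨μ, μadd, μsmul, μzero, μne⟩ := sep φ hφ t (Mv a b) (ih a b hab) hnx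
          have μ0 : μ 0 = 0 := μzero 0 (zero_mem _)
          have μsum : ∀ (F : Fin n → A), (∀ l, F l ∈ I ^ t) →
              μ (∑ l, F l) = ∑ l, μ (F l) := by
            intro F hF
            have key : ∀ s : Finset (Fin n), μ (∑ l ∈ s, F l) = ∑ l ∈ s, μ (F l) := by
              intro s
              induction s using Finset.induction_on with
              | empty => simpa using μ0
              | @insert c s' hc ih' =>
                rw [Finset.sum_insert hc, Finset.sum_insert hc,
                  μadd _ _ (hF c) (sum_mem (fun l _ => hF l)), ih']
            exact key Finset.univ
          set C : Matrix (Fin n) (Fin n) k := fun p q =>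
            if blockIdx K nn (p : ℕ) = i ∧ blockIdx K nn (q : ℕ) = j then μ (Mv p q) else 0
            with hC
          have hCapp : ∀ p q : Fin n, C p q =
              if blockIdx K nn (p : ℕ) = i ∧ blockIdx K nn (q : ℕ) = j then μ (Mv p q)
              else 0 := fun _ _ => rfl
          have hDi : ∀ (M : Matrix (Fin n) (Fin n) k) (p q : Fin n),
              diagBlock n K nn i M p q =
              if blockIdx K nn (p : ℕ) = i ∧ blockIdx K nn (q : ℕ) = i then M p q else 0 :=
            fun _ _ _ => rfl
          have hDj : ∀ (M : Matrix (Fin n) (Fin n) k) (p q : Fin n),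
              diagBlock n K nn j M p q =
              if blockIdx K nn (p : ℕ) = j ∧ blockIdx K nn (q : ℕ) = j then M p q else 0 :=
            fun _ _ _ => rfl
          have hsupp : IsBlockSupported n K nn i j C := by
            intro p q h
            rw [hCapp, if_neg h]
          have hint : ∀ g, diagBlock n K nn i ((ρbar g).val) * C
              = C * diagBlock n K nn j ((ρbar g).val) := by
            intro g
            have hφρ₁ : ∀ p q : Fin n, φ ((M₁ * ρA g * M₁⁻¹).val p q) = (ρbar g).val p q := by
              intro p q
              rw [← h1r g]; rfl
            have hφρ₂ : ∀ p q : Fin n, φ ((M₂ * ρA g * M₂⁻¹).val p q) = (ρbar g).val p q := by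
              intro p q
              rw [← h2r g]; rfl
            ext p q
            rw [Matrix.mul_apply, Matrix.mul_apply]
            by_cases hp : blockIdx K nn (p : ℕ) = i
            · by_cases hq : blockIdx K nn (q : ℕ) = j
              · -- main case
                have hMblk : ∀ l : Fin n, blockIdx K nn (l : ℕ) = i → Mv l q ∈ I ^ t :=
                  fun l hl => ih l q (by omega)
                have hMblk' : ∀ l : Fin n, blockIdx K nn (l : ℕ) = j → Mv p l ∈ I ^ t :=
                  fun l hl => ih p l (by omega)
                set X : A := ∑ l : Fin n,
                    (if blockIdx K nn (l : ℕ) = i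
                      then (M₁ * ρA g * M₁⁻¹).val p l * Mv l q else 0) with hX
                set Y : A := ∑ l : Fin n,
                    (if blockIdx K nn (l : ℕ) = j
                      then Mv p l * (M₂ * ρA g * M₂⁻¹).val l q else 0) with hY
                have hXmem : ∀ l : Fin n,
                    (if blockIdx K nn (l : ℕ) = i
                      then (M₁ * ρA g * M₁⁻¹).val p l * Mv l q else 0) ∈ I ^ t := by
                  intro l
                  split
                  · exact Ideal.mul_mem_left _ _ (hMblk l (by assumption))
                  · exact zero_mem _
                have hYmem : ∀ l : Fin n,
                    (if blockIdx K nn (l : ℕ) = j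
                      then Mv p l * (M₂ * ρA g * M₂⁻¹).val l q else 0) ∈ I ^ t := by
                  intro l
                  split
                  · exact Ideal.mul_mem_right _ _ (hMblk' l (by assumption))
                  · exact zero_mem _
                have hLHS : ∑ l, diagBlock n K nn i ((ρbar g).val) p l * C l q = μ X := by
                  rw [hX, μsum _ hXmem]
                  refine Finset.sum_congr rfl fun l _ => ?_
                  by_cases hl : blockIdx K nn (l : ℕ) = i
                  · rw [hDi, if_pos ⟨hp, hl⟩, hCapp, if_pos ⟨hl, hq⟩, if_pos hl,
                      μsmul _ _ (hMblk l hl), hφρ₁]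
                  · rw [hDi, if_neg (fun h => hl h.2), if_neg hl, μ0, zero_mul]
                have hRHS : ∑ l, C p l * diagBlock n K nn j ((ρbar g).val) l q = μ Y := by
                  rw [hY, μsum _ hYmem]
                  refine Finset.sum_congr rfl fun l _ => ?_
                  by_cases hl : blockIdx K nn (l : ℕ) = j
                  · rw [hDj, if_pos ⟨hl, hq⟩, hCapp, if_pos ⟨hp, hl⟩, if_pos hl,
                      show Mv p l * (M₂ * ρA g * M₂⁻¹).val l q
                        = (M₂ * ρA g * M₂⁻¹).val l q * Mv p l from mul_comm _ _,
                      μsmul _ _ (hMblk' l hl), hφρ₂, mul_comm]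
                  · rw [hDj, if_neg (fun h => hl h.1), if_neg hl, μ0, mul_zero]
                rw [hLHS, hRHS]
                have hXfull : ((M₁ * ρA g * M₁⁻¹).val * Mv) p q - X ∈ I ^ (t + 1) := by
                  rw [Matrix.mul_apply, hX, ← Finset.sum_sub_distrib]
                  apply sum_mem
                  intro l _
                  by_cases hl : blockIdx K nn (l : ℕ) = i
                  · rw [if_pos hl, sub_self]; exact zero_mem _
                  · rw [if_neg hl, sub_zero]
                    rcases lt_or_gt_of_ne hl with hlt | hgt
                    · rw [h1 g p l (by omega), zero_mul]; exact zero_mem _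
                    · exact Ideal.mul_mem_left _ _ (ihm l q (by omega) (by omega))
                have hYfull : (Mv * (M₂ * ρA g * M₂⁻¹).val) p q - Y ∈ I ^ (t + 1) := by
                  rw [Matrix.mul_apply, hY, ← Finset.sum_sub_distrib]
                  apply sum_mem
                  intro l _
                  by_cases hl : blockIdx K nn (l : ℕ) = j
                  · rw [if_pos hl, sub_self]; exact zero_mem _
                  · rw [if_neg hl, sub_zero]
                    rcases lt_or_gt_of_ne hl with hlt | hgt
                    · exact Ideal.mul_mem_right _ _ (ihm p l (by omega) (by omega))
                    · rw [h2 g l q (by omega), mul_zero]; exact zero_mem _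
                have hfull : ((M₁ * ρA g * M₁⁻¹).val * Mv) p q
                    = (Mv * (M₂ * ρA g * M₂⁻¹).val) p q := by rw [rel g]
                have hXY : X - Y ∈ I ^ (t + 1) := by
                  have hrw : X - Y = ((Mv * (M₂ * ρA g * M₂⁻¹).val) p q - Y)
                      - (((M₁ * ρA g * M₁⁻¹).val * Mv) p q - X) := by
                    rw [hfull]; ring
                  rw [hrw]
                  exact sub_mem hYfull hXfull
                have hXYt : X - Y ∈ I ^ t := Ideal.pow_le_pow_right (Nat.le_succ t) hXY
                have hYt : Y ∈ I ^ t := sum_mem (fun l _ => hYmem l)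
                have hμeq : μ X = μ Y + μ (X - Y) := by
                  rw [← μadd _ _ hYt hXYt]
                  congr 1
                  ring
                rw [hμeq, μzero _ hXY, add_zero]
              · rw [Finset.sum_eq_zero, Finset.sum_eq_zero]
                · intro l _
                  rw [hDj, if_neg (fun h => hq h.2), mul_zero]
                · intro l _
                  rw [hCapp, if_neg (fun h => hq h.2), mul_zero]
            · rw [Finset.sum_eq_zero, Finset.sum_eq_zero]
              · intro l _
                rw [hCapp, if_neg (fun h => hp h.1), zero_mul]
              · intro l _
                rw [hDi, if_neg (fun h => hp h.1), zero_mul]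
          have hC0 : C = 0 := hom0 i j hiK hjK (by omega) C hsupp hint
          have hCab : C a b = μ (Mv a b) := by
            rw [hCapp, if_pos ⟨rfl, rfl⟩]
          rw [hC0] at hCab
          exact μne (by rw [← hCab]; rfl)
      intro a b hab
      exact aux K a b hab (Nat.sub_le _ _)
  intro a b hab
  have hmem := main Nn a b hab
  rw [hNn, Ideal.zero_eq_bot] at hmem
  exact Ideal.mem_bot.mp hmem

/-- let `ρ̄ : Γ → P(k) ⊆ GL_n(k)` be a representation landing in the
standard parabolic `P` with graded pieces `ρ̄_1, …, ρ̄_K` satisfying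
`Hom_Γ(ρ̄_i, ρ̄_j) = 0` for `i ≠ j` (encoded via block-supported intertwining matrices).
If `A` is a local Artinian ring with residue field `k` (via `φ`) and
`M₁, M₂ ∈ GL_n(A)` both conjugate a fixed lift `ρ_A` of `ρ̄` into `P(A)` with reduction
`ρ̄`, then `M₁ M₂⁻¹ ∈ P(A)`. -/
theorem statement_6 {Γ : Type*} [Group Γ] {k : Type*} [Field k] [Finite k]
    (n K : ℕ) (nn : ℕ → ℕ) (hpos : ∀ i < K, 0 < nn i)
    (hsum : ∑ i ∈ Finset.range K, nn i = n)
    (ρbar : Γ →* GL (Fin n) k) (hP : ∀ g, IsBlockUpper n K nn (ρbar g).val)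
    (hom0 : ∀ i j : ℕ, i < K → j < K → i ≠ j → ∀ C : Matrix (Fin n) (Fin n) k,
      IsBlockSupported n K nn i j C →
      (∀ g, diagBlock n K nn i ((ρbar g).val) * C = C * diagBlock n K nn j ((ρbar g).val)) →
      C = 0)
    {A : Type*} [CommRing A] [IsArtinianRing A] [IsLocalRing A]
    (φ : A →+* k) (hφ : Function.Surjective φ) (hker : ∀ a : A, φ a = 0 ↔ ¬IsUnit a)
    (ρA : Γ →* GL (Fin n) A)
    (hlift : ∀ g, ((ρA g).val).map φ = (ρbar g).val)
    (M₁ M₂ : GL (Fin n) A)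
    (h1 : ∀ g, IsBlockUpper n K nn ((M₁ * ρA g * M₁⁻¹).val))
    (h1r : ∀ g, ((M₁ * ρA g * M₁⁻¹).val).map φ = (ρbar g).val)
    (h2 : ∀ g, IsBlockUpper n K nn ((M₂ * ρA g * M₂⁻¹).val))
    (h2r : ∀ g, ((M₂ * ρA g * M₂⁻¹).val).map φ = (ρbar g).val) :
    IsBlockUpper n K nn ((M₁ * M₂⁻¹).val) ∧ IsBlockUpper n K nn (((M₁ * M₂⁻¹)⁻¹).val) := by
  constructor
  · exact key n K nn hsum ρbar hom0 φ hφ hker ρA M₁ M₂ h1 h1r h2 h2r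
  · rw [mul_inv_rev, inv_inv]
    exact key n K nn hsum ρbar hom0 φ hφ hker ρA M₂ M₁ h2 h2r h1 h1r
end

section
/- Let Γ be a profinite group with finite-dimensional continuous cohomology, k a finite field, ρ̄ : Γ → GL_n(k) continuous preserving a filtration F with graded pieces ρ̄_1,...,ρ̄_k, and let Ad_F ρ̄ ⊆ Ad ρ̄ be the subrepresentation of filtration-preserving endomorphisms. Suppose Hom_Γ(ρ̄_i, ρ̄_j) = 0 for all i ≠ j. Then H^0(Γ, Ad_F ρ̄) = H^0(Γ, Ad ρ̄) and the natural map H^1(Γ, Ad_F ρ̄) → H^1(Γ, Ad ρ̄) is injective. -/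
/-- Key lemma: if the commutator `ρ g ∘ f - f ∘ ρ g` maps each `Fil i` into `Fil i`,
then `f` itself preserves the filtration. -/
lemma statement_7_key {k : Type*} [Field k] {Γ : Type*} [Group Γ]
    {V : Type*} [AddCommGroup V] [Module k V]
    (ρ : Representation k Γ V) (K : ℕ) (Fil : ℕ → Submodule k V)
    (h0 : Fil 0 = ⊥) (htop : Fil K = ⊤) (hmono : Monotone Fil)
    (hom0 : ∀ i j : ℕ, 1 ≤ i → i ≤ K → 1 ≤ j → j ≤ K → i ≠ j →
      ∀ T : V →ₗ[k] V,
        (∀ v ∈ Fil i, T v ∈ Fil j) →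
        (∀ v ∈ Fil (i - 1), T v ∈ Fil (j - 1)) →
        (∀ (g : Γ), ∀ v ∈ Fil i, ρ g (T v) - T (ρ g v) ∈ Fil (j - 1)) →
        ∀ v ∈ Fil i, T v ∈ Fil (j - 1))
    (f : Module.End k V)
    (hcomm : ∀ (g : Γ) (i : ℕ), ∀ v ∈ Fil i, ρ g (f v) - f (ρ g v) ∈ Fil i) :
    ∀ (i : ℕ), ∀ v ∈ Fil i, f v ∈ Fil i := by
  have main : ∀ m : ℕ, ∀ i, ∀ v ∈ Fil i, f v ∈ Fil (i + (K - m)) := by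
    intro m
    induction m with
    | zero =>
      intro i v hv
      have htop' : Fil (i + (K - 0)) = ⊤ :=
        top_le_iff.mp (htop ▸ hmono (by omega))
      rw [htop']; trivial
    | succ m ih =>
      intro i v hv
      by_cases hmK : K ≤ m
      · have : K - (m + 1) = K - m := by omega
        rw [this]; exact ih i v hv
      · push_neg at hmK
        by_cases hi0 : i = 0
        · subst hi0
          rw [h0] at hv
          simp only [Submodule.mem_bot] at hv
          rw [hv, map_zero]
          exact (Fil _).zero_mem
        · by_cases hbig : K ≤ i + (K - (m + 1))
          · have htop' : Fil (i + (K - (m + 1))) = ⊤ :=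
              top_le_iff.mp (htop ▸ hmono hbig)
            rw [htop']; trivial
          · push_neg at hbig
            set j := i + (K - (m + 1)) + 1 with hj
            have hij : i + (K - m) = j := by omega
            have hj1 : j - 1 = i + (K - (m + 1)) := by omega
            have res := hom0 i j (by omega) (by omega) (by omega) (by omega) (by omega) f
              (fun v hv => hij ▸ ih i v hv)
              (fun v hv => by
                have := ih (i - 1) v hv
                have heq : i - 1 + (K - m) = j - 1 := by omega
                rwa [heq] at this)
              (fun g v hv => hj1 ▸ hmono (by omega) (hcomm g i v hv))
              v hv
            rwa [hj1] at res
  have := main K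
  simpa using this

/-- Let `ρ̄` be a representation of `Γ` on a finite-dimensional `k`-vector
space `V` preserving a filtration `Fil` with graded pieces `ρ̄_1, …, ρ̄_K`, and let
`Ad_F ρ̄ ⊆ Ad ρ̄` be the filtration-preserving endomorphisms.  Assume
`Hom_Γ(ρ̄_i, ρ̄_j) = 0` for `i ≠ j` (encoded below via linear maps between the
subquotients `Fil i / Fil (i-1)`).  Then:
(1) `H^0(Γ, Ad_F ρ̄) = H^0(Γ, Ad ρ̄)`, i.e. every `Γ`-equivariant endomorphism of `V`
    preserves the filtration; and
(2) `H^1(Γ, Ad_F ρ̄) → H^1(Γ, Ad ρ̄)` is injective, i.e. every `Ad_F`-valued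
    `1`-cocycle which is an `Ad`-coboundary is an `Ad_F`-coboundary. -/
theorem statement_7 {k : Type*} [Field k] [Finite k] {Γ : Type*} [Group Γ]
    {V : Type*} [AddCommGroup V] [Module k V] [FiniteDimensional k V]
    (ρ : Representation k Γ V) (K : ℕ) (Fil : ℕ → Submodule k V)
    (h0 : Fil 0 = ⊥) (htop : Fil K = ⊤) (hmono : Monotone Fil)
    (hstab : ∀ (g : Γ) (i : ℕ), ∀ v ∈ Fil i, ρ g v ∈ Fil i)
    (hom0 : ∀ i j : ℕ, 1 ≤ i → i ≤ K → 1 ≤ j → j ≤ K → i ≠ j →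
      ∀ T : V →ₗ[k] V,
        (∀ v ∈ Fil i, T v ∈ Fil j) →
        (∀ v ∈ Fil (i - 1), T v ∈ Fil (j - 1)) →
        (∀ (g : Γ), ∀ v ∈ Fil i, ρ g (T v) - T (ρ g v) ∈ Fil (j - 1)) →
        ∀ v ∈ Fil i, T v ∈ Fil (j - 1)) :
    (∀ f : Module.End k V, (∀ g : Γ, (ρ g) ∘ₗ f = f ∘ₗ (ρ g)) →
        ∀ (i : ℕ), ∀ v ∈ Fil i, f v ∈ Fil i) ∧
      (∀ c : Γ → Module.End k V,
        (∀ (g : Γ) (i : ℕ), ∀ v ∈ Fil i, c g v ∈ Fil i) →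
        (∀ g h : Γ, c (g * h) = c g + (ρ g) ∘ₗ (c h) ∘ₗ (ρ g⁻¹)) →
        (∃ f : Module.End k V, ∀ g : Γ, c g = (ρ g) ∘ₗ f ∘ₗ (ρ g⁻¹) - f) →
        ∃ f : Module.End k V, (∀ (i : ℕ), ∀ v ∈ Fil i, f v ∈ Fil i) ∧
          ∀ g : Γ, c g = (ρ g) ∘ₗ f ∘ₗ (ρ g⁻¹) - f) := by
  constructor
  · intro f hf
    apply statement_7_key ρ K Fil h0 htop hmono hom0 f
    intro g i v hv
    have : ρ g (f v) = f (ρ g v) := by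
      have := congrArg (fun T : V →ₗ[k] V => T v) (hf g)
      simpa using this
    rw [this, sub_self]
    exact (Fil i).zero_mem
  · rintro c hcF hcoc ⟨f, hf⟩
    refine ⟨f, ?_, hf⟩
    apply statement_7_key ρ K Fil h0 htop hmono hom0 f
    intro g i v hv
    have hinv : ρ g⁻¹ (ρ g v) = v := by
      have : (ρ g⁻¹ * ρ g) v = (ρ (g⁻¹ * g)) v := by rw [map_mul]
      simpa using this
    have hcg : c g (ρ g v) = ρ g (f v) - f (ρ g v) := by
      rw [hf g]
      simp [hinv]
    rw [← hcg]
    exact hcF g i (ρ g v) (hstab g i v hv)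
end
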